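/- Let N be a positive integer, let 1 < p < N, α > 0, t > 0, K > 0, r > 0 be real numbers, and let y ∈ ℝ^N. For ε > 0 define the scaled Talenti-type function V_ε(x) = K · ε^{α(N−p)/(p(p−1))} / ( ε^{αp/(p−1)} + |x−y|^{p/(p−1)} )^{(N−p)/p}. Then there exists a constant C > 0, independent of ε, such that for every ε with 0 < ε < r^{1/α}: ∫_{B_r(y)} V_ε(x)^t dx ≥ C · ε^{α(N − (N−p)t/p)}. -/

import Mathlib

open Real MeasureTheory

/-- Lower bound for integrals of powers of the scaled Talenti-type functions: there is
`C > 0`, independent of `ε`, with `∫_{B_r(y)} V_ε^t ≥ C ε^{α(N − (N−p)t/p)}` for every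
`0 < ε < r^{1/α}`. -/
theorem stmt14 (N : ℕ) (hN : 0 < N) (p α t K r : ℝ) (hp1 : 1 < p) (hpN : p < (N : ℝ))
    (hα : 0 < α) (ht : 0 < t) (hK : 0 < K) (hr : 0 < r) (y : EuclideanSpace ℝ (Fin N)) :
    ∃ C : ℝ, 0 < C ∧ ∀ ε : ℝ, 0 < ε → ε < r ^ (1 / α) →
      C * ε ^ (α * ((N : ℝ) - ((N : ℝ) - p) * t / p)) ≤
        ∫ x in Metric.ball y r,
          (K * ε ^ (α * ((N : ℝ) - p) / (p * (p - 1))) /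
            (ε ^ (α * p / (p - 1)) + ‖x - y‖ ^ (p / (p - 1))) ^ (((N : ℝ) - p) / p)) ^ t := by
  haveI : Nonempty (Fin N) := ⟨⟨0, hN⟩⟩
  have hp0 : (0:ℝ) < p := lt_trans one_pos hp1
  have hp1' : (0:ℝ) < p - 1 := sub_pos.2 hp1
  have hNp : (0:ℝ) < (N:ℝ) - p := sub_pos.2 hpN
  set q : ℝ := p / (p - 1) with hq
  set c : ℝ := ((N:ℝ) - p) / p with hc
  set a : ℝ := α * ((N:ℝ) - p) / (p * (p - 1)) with ha
  set b : ℝ := α * p / (p - 1) with hb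
  have hq0 : 0 < q := div_pos hp0 hp1'
  have hcc : 0 < c := div_pos hNp hp0
  set c0 : ℝ := (K * 2 ^ (-c)) ^ t with hc0def
  have hc0pos : 0 < c0 :=
    rpow_pos_of_pos (mul_pos hK (rpow_pos_of_pos two_pos _)) t
  set vol1 : ℝ := (volume (Metric.ball (0 : EuclideanSpace ℝ (Fin N)) 1)).toReal with hvol1def
  have hvol1 : 0 < vol1 :=
    ENNReal.toReal_pos (Metric.measure_ball_pos volume _ one_pos).ne' measure_ball_lt_top.ne
  refine ⟨c0 * vol1, mul_pos hc0pos hvol1, fun ε hε hεr => ?_⟩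
  set s : ℝ := ε ^ α with hs
  have hspos : 0 < s := rpow_pos_of_pos hε α
  have hsr : s < r := by
    have := Real.rpow_lt_rpow hε.le hεr hα
    rwa [← Real.rpow_mul hr.le, one_div_mul_cancel hα.ne', Real.rpow_one] at this
  set f : EuclideanSpace ℝ (Fin N) → ℝ :=
    fun x => (K * ε ^ a / (ε ^ b + ‖x - y‖ ^ q) ^ c) ^ t with hf
  have hden : ∀ x : EuclideanSpace ℝ (Fin N), 0 < ε ^ b + ‖x - y‖ ^ q := fun x =>
    add_pos_of_pos_of_nonneg (rpow_pos_of_pos hε b) (rpow_nonneg (norm_nonneg _) q)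
  have hquot : ∀ x : EuclideanSpace ℝ (Fin N),
      0 < K * ε ^ a / (ε ^ b + ‖x - y‖ ^ q) ^ c := fun x =>
    div_pos (mul_pos hK (rpow_pos_of_pos hε a)) (rpow_pos_of_pos (hden x) c)
  have hfpos : ∀ x, 0 < f x := fun x => rpow_pos_of_pos (hquot x) t
  have hcont : Continuous f := by
    have h1 : Continuous fun x : EuclideanSpace ℝ (Fin N) => ‖x - y‖ :=
      (continuous_id.sub continuous_const).norm
    have h2 : Continuous fun x : EuclideanSpace ℝ (Fin N) => ‖x - y‖ ^ q :=
      h1.rpow_const fun x => Or.inr hq0.le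
    have h3 : Continuous fun x : EuclideanSpace ℝ (Fin N) => (ε ^ b + ‖x - y‖ ^ q) ^ c :=
      (continuous_const.add h2).rpow_const fun x => Or.inl (hden x).ne'
    have h4 : Continuous fun x : EuclideanSpace ℝ (Fin N) =>
        K * ε ^ a / (ε ^ b + ‖x - y‖ ^ q) ^ c :=
      continuous_const.div h3 fun x => (rpow_pos_of_pos (hden x) c).ne'
    exact h4.rpow_const fun x => Or.inl (hquot x).ne'
  have hInt : IntegrableOn f (Metric.ball y r) volume :=
    (hcont.locallyIntegrable.integrableOn_isCompact (isCompact_closedBall y r)).mono_set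
      Metric.ball_subset_closedBall
  have hIntS : IntegrableOn f (Metric.ball y s) volume :=
    hInt.mono_set (Metric.ball_subset_ball hsr.le)
  -- pointwise lower bound on the small ball
  set c1 : ℝ := c0 * ε ^ ((a - b * c) * t) with hc1def
  have hlow : ∀ x ∈ Metric.ball y s, c1 ≤ f x := by
    intro x hx
    have hxlt : ‖x - y‖ < s := by
      rwa [Metric.mem_ball, dist_eq_norm] at hx
    have h1 : ‖x - y‖ ^ q ≤ s ^ q :=
      Real.rpow_le_rpow (norm_nonneg _) hxlt.le hq0.le
    have hsq : s ^ q = ε ^ (α * q) := by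
      rw [hs, ← Real.rpow_mul hε.le]
    have hbq : α * q = b := by rw [hq, hb]; ring
    have h2 : ε ^ b + ‖x - y‖ ^ q ≤ 2 * ε ^ b := by
      have := h1.trans_eq (by rw [hsq, hbq])
      linarith
    have h3 : (ε ^ b + ‖x - y‖ ^ q) ^ c ≤ (2 * ε ^ b) ^ c :=
      Real.rpow_le_rpow (hden x).le h2 hcc.le
    have h4 : K * ε ^ a / (2 * ε ^ b) ^ c ≤ K * ε ^ a / (ε ^ b + ‖x - y‖ ^ q) ^ c :=
      div_le_div_of_nonneg_left (mul_pos hK (rpow_pos_of_pos hε a)).le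
        (rpow_pos_of_pos (hden x) c) h3
    have h5 : K * ε ^ a / (2 * ε ^ b) ^ c = K * 2 ^ (-c) * ε ^ (a - b * c) := by
      rw [Real.mul_rpow two_pos.le (rpow_pos_of_pos hε b).le,
        ← Real.rpow_mul hε.le, Real.rpow_neg two_pos.le,
        Real.rpow_sub hε]
      field_simp
    have h6 : c1 ≤ (K * 2 ^ (-c) * ε ^ (a - b * c)) ^ t := by
      rw [hc1def, hc0def, Real.rpow_mul hε.le, ← Real.mul_rpow
        (mul_pos hK (rpow_pos_of_pos two_pos _)).le (rpow_nonneg hε.le _)]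
    calc c1 ≤ (K * 2 ^ (-c) * ε ^ (a - b * c)) ^ t := h6
      _ = (K * ε ^ a / (2 * ε ^ b) ^ c) ^ t := by rw [h5]
      _ ≤ f x := Real.rpow_le_rpow (by positivity) h4 ht.le
  have hvolS : (volume (Metric.ball y s)).toReal = ε ^ (α * (N:ℝ)) * vol1 := by
    rw [Measure.addHaar_ball volume y hspos.le, ENNReal.toReal_mul,
      ENNReal.toReal_ofReal (by positivity), finrank_euclideanSpace_fin, hvol1def, hs,
      ← Real.rpow_natCast (ε ^ α) N, ← Real.rpow_mul hε.le]
  have step1 : c1 * (volume (Metric.ball y s)).toReal ≤ ∫ x in Metric.ball y s, f x :=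
    setIntegral_ge_of_const_le_real measurableSet_ball measure_ball_lt_top.ne hlow hIntS
  have step2 : (∫ x in Metric.ball y s, f x) ≤ ∫ x in Metric.ball y r, f x :=
    setIntegral_mono_set hInt
      (Filter.Eventually.of_forall fun x => (hfpos x).le)
      (HasSubset.Subset.eventuallyLE (Metric.ball_subset_ball hsr.le))
  have hexp : α * ((N : ℝ) - ((N : ℝ) - p) * t / p) = (a - b * c) * t + α * (N:ℝ) := by
    rw [ha, hb, hc]
    field_simp
    ring
  have key : c0 * vol1 * ε ^ (α * ((N : ℝ) - ((N : ℝ) - p) * t / p)) =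
      c1 * (volume (Metric.ball y s)).toReal := by
    rw [hvolS, hc1def, hexp, Real.rpow_add hε]
    ring
  rw [key]
  exact step1.trans step2
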